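/- If M = Σ_{i=0}^n m_i P_i^n(Φ, Φ^⊥) with m_i ∈ ℝ, then the partial transpose satisfies M^{T_{B⊗n}} = Σ_{k=0}^n t_k P_k^n(P₊, P₋) with t_k = Σ_{i=0}^n x_{i,k} m_i, where x_{i,k} = d^{−n} Σ_{m=max(0,i+k−n)}^{min(i,k)} binom(k,m) binom(n−k,i−m) (−1)^{i−m} (d−1)^{k−m} (d+1)^{n−k+m−i}; in particular the eigenvalues of M^{T_{B⊗n}} are among {t_k}. -/

import Mathlib

open Matrix BigOperators Finset
open scoped ComplexOrder

noncomputable section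

/-- Partial transpose on the second tensor factor. -/
def ptB {a b : Type*} (M : Matrix (a × b) (a × b) ℂ) : Matrix (a × b) (a × b) ℂ :=
  fun x y => M (x.1, y.2) (y.1, x.2)

/-- Trace norm of a matrix: `tr √(Mᴴ M)`. -/
def traceNorm {ι : Type*} [Fintype ι] [DecidableEq ι] (M : Matrix ι ι ℂ) : ℝ :=
  ((((Matrix.posSemidef_conjTranspose_mul_self M).1.eigenvectorUnitary : Matrix ι ι ℂ) *
      Matrix.diagonal (fun i =>
        (Real.sqrt ((Matrix.posSemidef_conjTranspose_mul_self M).1.eigenvalues i) : ℂ)) *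
      (star ((Matrix.posSemidef_conjTranspose_mul_self M).1.eigenvectorUnitary :
        Matrix ι ι ℂ))).trace).re

/-- Matrix logarithm (base 2) of a Hermitian matrix, taken on its support. -/
def mlog {ι : Type*} [Fintype ι] [DecidableEq ι] (M : Matrix ι ι ℂ) : Matrix ι ι ℂ :=
  if hM : M.IsHermitian then
    (hM.eigenvectorUnitary : Matrix ι ι ℂ) *
      Matrix.diagonal (fun i => (Real.logb 2 (hM.eigenvalues i) : ℂ)) *
      (star (hM.eigenvectorUnitary : Matrix ι ι ℂ))
  else 0

/-- Quantum relative entropy `D(ρ‖σ) = tr ρ (log ρ − log σ)` (base-2 logs on support). -/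
def Drel {ι : Type*} [Fintype ι] [DecidableEq ι] (ρ σ : Matrix ι ι ℂ) : ℝ :=
  ((ρ * (mlog ρ - mlog σ)).trace).re

/-- Quantum information variance `V(ρ‖σ) = tr ρ (log ρ − log σ)² − D(ρ‖σ)²`. -/
def Vrel {ι : Type*} [Fintype ι] [DecidableEq ι] (ρ σ : Matrix ι ι ℂ) : ℝ :=
  ((ρ * ((mlog ρ - mlog σ) * (mlog ρ - mlog σ))).trace).re - (Drel ρ σ) ^ 2

/-- Von Neumann entropy `S(ρ) = −tr ρ log ρ` (base 2). -/
def Sent {ι : Type*} [Fintype ι] [DecidableEq ι] (ρ : Matrix ι ι ℂ) : ℝ :=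
  -((ρ * mlog ρ).trace).re

/-- Maximally entangled state `Φ(d) = (1/d) ∑ |ii⟩⟨jj|`. -/
def Phi (d : ℕ) : Matrix (Fin d × Fin d) (Fin d × Fin d) ℂ :=
  fun x y => if x.1 = x.2 ∧ y.1 = y.2 then (1 / d : ℂ) else 0

/-- Swap operator on `C^d ⊗ C^d`. -/
def swapOp (d : ℕ) : Matrix (Fin d × Fin d) (Fin d × Fin d) ℂ :=
  fun x y => if x.1 = y.2 ∧ x.2 = y.1 then 1 else 0

/-- Projection onto the symmetric subspace. -/
def Psym (d : ℕ) : Matrix (Fin d × Fin d) (Fin d × Fin d) ℂ :=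
  (1 / 2 : ℂ) • (1 + swapOp d)

/-- Projection onto the antisymmetric subspace. -/
def Pasym (d : ℕ) : Matrix (Fin d × Fin d) (Fin d × Fin d) ℂ :=
  (1 / 2 : ℂ) • (1 - swapOp d)

end

/-- n-fold tensor (Kronecker) product of a family of matrices. -/
noncomputable def tpow {ι : Type*} [Fintype ι] (n : ℕ) (f : Fin n → Matrix ι ι ℂ) :
    Matrix (Fin n → ι) (Fin n → ι) ℂ :=
  fun x y => ∏ j, f j (x j) (y j)

/-- `P_i^n(X,Y)`: the sum of all n-fold tensor products with exactly `i` factors `X`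
and `n − i` factors `Y`. -/
noncomputable def Pfam {ι : Type*} [Fintype ι] (n i : ℕ) (X Y : Matrix ι ι ℂ) :
    Matrix (Fin n → ι) (Fin n → ι) ℂ :=
  ∑ s ∈ Finset.univ.filter
      (fun s : Fin n → Bool => (Finset.univ.filter fun j => s j = true).card = i),
    tpow n (fun j => if s j then X else Y)

/-- Factorwise partial transpose (on each second factor) of an operator on
the n-fold tensor power of `C^d ⊗ C^d`. -/
noncomputable def ptBn {a b : Type*} (n : ℕ)
    (M : Matrix (Fin n → a × b) (Fin n → a × b) ℂ) :
    Matrix (Fin n → a × b) (Fin n → a × b) ℂ :=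
  fun x y => M (fun j => ((x j).1, (y j).2)) (fun j => ((y j).1, (x j).2))

/-- The coefficients `x_{i,k}`. -/
noncomputable def xcoef (d n i k : ℕ) : ℝ :=
  (1 / (d : ℝ) ^ n) *
    ∑ m ∈ Finset.Icc (i + k - n) (min i k),
      (k.choose m : ℝ) * ((n - k).choose (i - m) : ℝ) * (-1 : ℝ) ^ (i - m) *
        ((d : ℝ) - 1) ^ (k - m) * ((d : ℝ) + 1) ^ (n - k + m - i)


/- ===================== Auxiliary development ===================== -/

section AuxTpow

open Finset

variable {ι : Type*} [Fintype ι] [DecidableEq ι]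

lemma tpow_one (n : ℕ) : tpow n (fun _ => (1 : Matrix ι ι ℂ)) = 1 := by
  funext x y
  show (∏ j, (1 : Matrix ι ι ℂ) (x j) (y j)) = (1 : Matrix (Fin n → ι) (Fin n → ι) ℂ) x y
  by_cases h : x = y
  · subst h; simp [Matrix.one_apply]
  · obtain ⟨j, hj⟩ : ∃ j, x j ≠ y j := by
      by_contra hc; push_neg at hc; exact h (funext hc)
    rw [Matrix.one_apply_ne h]
    exact Finset.prod_eq_zero (Finset.mem_univ j) (by simp [Matrix.one_apply, hj])

lemma tpow_mul (n : ℕ) (f g : Fin n → Matrix ι ι ℂ) :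
    tpow n f * tpow n g = tpow n (fun j => f j * g j) := by
  funext x y
  show (∑ z : Fin n → ι, (∏ j, f j (x j) (z j)) * ∏ j, g j (z j) (y j))
      = ∏ j, (f j * g j) (x j) (y j)
  simp only [← Finset.prod_mul_distrib, Matrix.mul_apply]
  exact (Fintype.prod_sum fun j w => f j (x j) w * g j w (y j)).symm

lemma tpow_eq_zero (n : ℕ) (f : Fin n → Matrix ι ι ℂ) (j : Fin n) (hj : f j = 0) :
    tpow n f = 0 := by
  funext x y
  show (∏ j, f j (x j) (y j)) = 0
  exact Finset.prod_eq_zero (Finset.mem_univ j) (by simp [hj])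

lemma tpow_congr (n : ℕ) {f g : Fin n → Matrix ι ι ℂ} (h : ∀ j, f j = g j) :
    tpow n f = tpow n g := by
  exact congrArg (tpow n) (funext h)

lemma tpow_expand (n : ℕ) (a b : Fin n → ℂ) (X Y : Matrix ι ι ℂ) :
    tpow n (fun j => a j • X + b j • Y)
      = ∑ t : Fin n → Bool, (∏ j, if t j then a j else b j) •
          tpow n (fun j => if t j then X else Y) := by
  funext x y
  have h1 : ∀ j : Fin n, (a j • X + b j • Y) (x j) (y j)
      = ∑ c : Bool, (if c then a j * X (x j) (y j) else b j * Y (x j) (y j)) := by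
    intro j
    simp [Matrix.add_apply, Matrix.smul_apply, smul_eq_mul]
  calc (tpow n (fun j => a j • X + b j • Y)) x y
      = ∏ j, ∑ c : Bool, (if c then a j * X (x j) (y j) else b j * Y (x j) (y j)) :=
        Finset.prod_congr rfl (fun j _ => h1 j)
    _ = ∑ t : Fin n → Bool, ∏ j,
          (if t j then a j * X (x j) (y j) else b j * Y (x j) (y j)) := Fintype.prod_sum _
    _ = ∑ t : Fin n → Bool, (∏ j, if t j then a j else b j) *
          ∏ j, (if t j then X else Y) (x j) (y j) := by
        refine Finset.sum_congr rfl fun t _ => ?_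
        rw [← Finset.prod_mul_distrib]
        exact Finset.prod_congr rfl fun j _ => by cases h : t j <;> simp [h]
    _ = (∑ t : Fin n → Bool, (∏ j, if t j then a j else b j) •
          tpow n (fun j => if t j then X else Y)) x y := by
        simp [Matrix.sum_apply, tpow, Matrix.smul_apply, smul_eq_mul]

end AuxTpow

section AuxPtBn

lemma ptBn_tpow {a b : Type*} [Fintype a] [Fintype b] (n : ℕ)
    (f : Fin n → Matrix (a × b) (a × b) ℂ) :
    ptBn n (tpow n f) = tpow n (fun j => ptB (f j)) := rfl

lemma ptBn_sum {a b : Type*} {κ : Type*} (n : ℕ) (s : Finset κ)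
    (f : κ → Matrix (Fin n → a × b) (Fin n → a × b) ℂ) :
    ptBn n (∑ i ∈ s, f i) = ∑ i ∈ s, ptBn n (f i) := by
  funext x y
  simp [ptBn, Matrix.sum_apply]

lemma ptBn_smul {a b : Type*} (n : ℕ) (c : ℂ)
    (M : Matrix (Fin n → a × b) (Fin n → a × b) ℂ) :
    ptBn n (c • M) = c • ptBn n M := by
  funext x y
  simp [ptBn, Matrix.smul_apply]

end AuxPtBn

section AuxSingle

lemma swap_mul_swap (d : ℕ) : swapOp d * swapOp d = 1 := by
  funext x y
  show (∑ z : Fin d × Fin d, swapOp d x z * swapOp d z y) = _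
  rw [Finset.sum_eq_single ((x.2, x.1) : Fin d × Fin d)]
  · by_cases h : x = y
    · subst h; simp [swapOp, Matrix.one_apply]
    · have h2 : ¬((x.2, x.1).1 = y.2 ∧ (x.2, x.1).2 = y.1) := by
        simp only [Prod.ext_iff] at h
        exact fun hc => h ⟨hc.2, hc.1⟩
      simp [swapOp, Matrix.one_apply_ne h, h2]
  · intro z _ hz
    have : ¬(x.1 = z.2 ∧ x.2 = z.1) := by
      rintro ⟨h1, h2⟩
      exact hz (Prod.ext_iff.mpr ⟨h2.symm, h1.symm⟩)
    simp [swapOp, this]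
  · intro h; exact absurd (Finset.mem_univ _) h

lemma Psym_add_Pasym (d : ℕ) : Psym d + Pasym d = 1 := by
  funext x y
  simp only [Psym, Pasym, Matrix.add_apply, Matrix.sub_apply, Matrix.smul_apply, smul_eq_mul]
  ring

lemma swap_eq_Psym_sub_Pasym (d : ℕ) : swapOp d = Psym d - Pasym d := by
  funext x y
  simp only [Psym, Pasym, Matrix.add_apply, Matrix.sub_apply, Matrix.smul_apply, smul_eq_mul]
  ring

lemma Psym_mul_Psym (d : ℕ) : Psym d * Psym d = Psym d := by
  simp only [Psym, Matrix.smul_mul, Matrix.mul_smul, smul_smul, mul_add, add_mul,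
    mul_sub, sub_mul, mul_one, one_mul, swap_mul_swap]
  module

lemma Pasym_mul_Pasym (d : ℕ) : Pasym d * Pasym d = Pasym d := by
  simp only [Pasym, Matrix.smul_mul, Matrix.mul_smul, smul_smul, mul_add, add_mul,
    mul_sub, sub_mul, mul_one, one_mul, swap_mul_swap]
  module

lemma Psym_mul_Pasym (d : ℕ) : Psym d * Pasym d = 0 := by
  simp only [Psym, Pasym, Matrix.smul_mul, Matrix.mul_smul, smul_smul, mul_add, add_mul,
    mul_sub, sub_mul, mul_one, one_mul, swap_mul_swap]
  module

lemma Pasym_mul_Psym (d : ℕ) : Pasym d * Psym d = 0 := by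
  simp only [Psym, Pasym, Matrix.smul_mul, Matrix.mul_smul, smul_smul, mul_add, add_mul,
    mul_sub, sub_mul, mul_one, one_mul, swap_mul_swap]
  module

lemma ptB_phi (d : ℕ) : ptB (Phi d) = (1 / (d : ℂ)) • swapOp d := by
  funext x y
  show Phi d (x.1, y.2) (y.1, x.2) = _
  simp only [Phi, swapOp, Matrix.smul_apply, smul_eq_mul]
  by_cases h : x.1 = y.2 ∧ x.2 = y.1
  · rw [if_pos ⟨h.1, h.2.symm⟩, if_pos h, mul_one]
  · rw [if_neg (fun hc => h ⟨hc.1, hc.2.symm⟩), if_neg h, mul_zero]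

lemma ptB_one {a b : Type*} [DecidableEq a] [DecidableEq b] :
    ptB (1 : Matrix (a × b) (a × b) ℂ) = 1 := by
  funext x y
  show (1 : Matrix (a × b) (a × b) ℂ) (x.1, y.2) (y.1, x.2) = _
  simp only [Matrix.one_apply, Prod.ext_iff]
  by_cases h1 : x.1 = y.1 <;> by_cases h2 : x.2 = y.2 <;>
    simp [h1, h2, eq_comm]

lemma ptB_sub {a b : Type*} (M N : Matrix (a × b) (a × b) ℂ) :
    ptB (M - N) = ptB M - ptB N := rfl

/-- Expansion coefficients -/
noncomputable def alphaC (d : ℕ) : Bool → ℂ := fun s => if s then 1 / (d : ℂ) else 1 - 1 / (d : ℂ)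
noncomputable def betaC (d : ℕ) : Bool → ℂ := fun s => if s then -(1 / (d : ℂ)) else 1 + 1 / (d : ℂ)
noncomputable def wC (d : ℕ) : Bool → Bool → ℂ := fun s t => if t then alphaC d s else betaC d s

lemma ptB_pattern (d : ℕ) (s : Bool) :
    ptB (if s then Phi d else 1 - Phi d) = alphaC d s • Psym d + betaC d s • Pasym d := by
  cases s
  · show ptB (1 - Phi d) = _
    rw [ptB_sub, ptB_one, ptB_phi, swap_eq_Psym_sub_Pasym, alphaC, betaC]
    simp only [Bool.false_eq_true, if_false]
    rw [← Psym_add_Pasym d]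
    module
  · show ptB (Phi d) = _
    rw [ptB_phi, swap_eq_Psym_sub_Pasym, alphaC, betaC]
    simp only [if_true]
    module

end AuxSingle

section AuxCount

open Finset

/-- Group a sum over boolean functions by weight. -/
lemma sum_boolfun_weight {M : Type*} [AddCommMonoid M] (n : ℕ) (g : (Fin n → Bool) → M) :
    ∑ t : Fin n → Bool, g t
      = ∑ k ∈ Finset.range (n + 1),
          ∑ t ∈ Finset.univ.filter
            (fun t : Fin n → Bool => (Finset.univ.filter fun j => t j = true).card = k), g t := by
  refine (Finset.sum_fiberwise_of_maps_to
    (g := fun t : Fin n → Bool => (Finset.univ.filter fun j => t j = true).card)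
    (fun t _ => ?_) g).symm
  exact Finset.mem_range_succ_iff.mpr (le_trans (Finset.card_filter_le _ _) (by simp))

/-- Bridge from boolean-function sums to subset sums. -/
lemma sum_boolfun_eq_sum_powersetCard {M : Type*} [AddCommMonoid M] (n i : ℕ)
    (F : (Fin n → Bool) → M) :
    ∑ s ∈ Finset.univ.filter
        (fun s : Fin n → Bool => (Finset.univ.filter fun j => s j = true).card = i), F s
      = ∑ S ∈ Finset.powersetCard i (Finset.univ : Finset (Fin n)),
          F (fun j => decide (j ∈ S)) := by
  refine Finset.sum_nbij' (fun s => Finset.univ.filter fun j => s j = true)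
    (fun S => fun j => decide (j ∈ S)) ?_ ?_ ?_ ?_ ?_
  · intro s hs
    simp only [Finset.mem_filter] at hs
    exact Finset.mem_powersetCard_univ.mpr hs.2
  · intro S hS
    simp only [Finset.mem_filter, Finset.mem_univ, true_and]
    rw [← Finset.mem_powersetCard_univ.mp hS]
    congr 1
    ext j
    simp
  · intro s _
    funext j
    simp
  · intro S _
    ext j
    simp
  · intro s _
    congr 1
    funext j
    simp

lemma prod_mem_pow (n : ℕ) (S T : Finset (Fin n)) (w : Bool → Bool → ℂ) :
    ∏ j, w (decide (j ∈ S)) (decide (j ∈ T))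
      = w true true ^ (S ∩ T).card * w true false ^ (S \ T).card
        * w false true ^ (T \ S).card * w false false ^ ((S ∪ T)ᶜ).card := by
  rw [← Finset.prod_filter_mul_prod_filter_not Finset.univ (· ∈ S)]
  have h1 : Finset.univ.filter (· ∈ S) = S := by ext j; simp
  have h2 : Finset.univ.filter (fun j => ¬ j ∈ S) = Sᶜ := by ext j; simp
  rw [h1, h2]
  rw [← Finset.prod_filter_mul_prod_filter_not S (· ∈ T)]
  rw [← Finset.prod_filter_mul_prod_filter_not Sᶜ (· ∈ T)]
  have h3 : S.filter (· ∈ T) = S ∩ T := by ext j; simp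
  have h4 : S.filter (fun j => ¬ j ∈ T) = S \ T := by ext j; simp [Finset.mem_sdiff]
  have h5 : Sᶜ.filter (· ∈ T) = T \ S := by ext j; simp [Finset.mem_sdiff, and_comm]
  have h6 : Sᶜ.filter (fun j => ¬ j ∈ T) = (S ∪ T)ᶜ := by
    ext j; simp [not_or, and_comm]
  rw [h3, h4, h5, h6]
  have e1 : ∏ j ∈ S ∩ T, w (decide (j ∈ S)) (decide (j ∈ T)) = w true true ^ (S ∩ T).card := by
    rw [← Finset.prod_const]
    refine Finset.prod_congr rfl fun j hj => ?_
    obtain ⟨hjS, hjT⟩ := Finset.mem_inter.mp hj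
    simp [hjS, hjT]
  have e2 : ∏ j ∈ S \ T, w (decide (j ∈ S)) (decide (j ∈ T)) = w true false ^ (S \ T).card := by
    rw [← Finset.prod_const]
    refine Finset.prod_congr rfl fun j hj => ?_
    obtain ⟨hjS, hjT⟩ := Finset.mem_sdiff.mp hj
    simp [hjS, hjT]
  have e3 : ∏ j ∈ T \ S, w (decide (j ∈ S)) (decide (j ∈ T)) = w false true ^ (T \ S).card := by
    rw [← Finset.prod_const]
    refine Finset.prod_congr rfl fun j hj => ?_
    obtain ⟨hjT, hjS⟩ := Finset.mem_sdiff.mp hj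
    simp [hjS, hjT]
  have e4 : ∏ j ∈ (S ∪ T)ᶜ, w (decide (j ∈ S)) (decide (j ∈ T))
      = w false false ^ ((S ∪ T)ᶜ).card := by
    rw [← Finset.prod_const]
    refine Finset.prod_congr rfl fun j hj => ?_
    have := Finset.mem_compl.mp hj
    simp only [Finset.mem_union, not_or] at this
    simp [this.1, this.2]
  rw [e1, e2, e3, e4]
  ring

lemma card_fiber (n i k m : ℕ) (T : Finset (Fin n)) (hT : T.card = k) (hmi : m ≤ i) :
    (((Finset.powersetCard i (Finset.univ : Finset (Fin n))).filter
        fun S => (S ∩ T).card = m)).card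
      = k.choose m * (n - k).choose (i - m) := by
  subst hT
  have hc : Tᶜ.card = n - T.card := by rw [Finset.card_compl, Fintype.card_fin]
  rw [← hc, ← Finset.card_powersetCard m T, ← Finset.card_powersetCard (i - m) Tᶜ,
    ← Finset.card_product]
  refine Finset.card_nbij' (fun S => (S ∩ T, S \ T)) (fun p => p.1 ∪ p.2) ?_ ?_ ?_ ?_
  · intro S hS
    simp only [Finset.mem_coe, Finset.mem_filter, Finset.mem_powersetCard_univ] at hS
    obtain ⟨hScard, hm⟩ := hS
    refine Finset.mem_product.mpr ⟨?_, ?_⟩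
    · exact Finset.mem_powersetCard.mpr ⟨Finset.inter_subset_right, hm⟩
    · refine Finset.mem_powersetCard.mpr ⟨?_, ?_⟩
      · intro j hj
        exact Finset.mem_compl.mpr (Finset.mem_sdiff.mp hj).2
      · show (S \ T).card = i - m
        have := Finset.card_inter_add_card_sdiff S T
        omega
  · rintro ⟨A, B⟩ hp
    obtain ⟨hA, hB⟩ := Finset.mem_product.mp hp
    obtain ⟨hAT, hAcard⟩ := Finset.mem_powersetCard.mp hA
    obtain ⟨hBT, hBcard⟩ := Finset.mem_powersetCard.mp hB
    have hdisj : Disjoint A B := by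
      rw [Finset.disjoint_left]
      intro j hjA hjB
      exact Finset.mem_compl.mp (hBT hjB) (hAT hjA)
    simp only [Finset.mem_coe, Finset.mem_filter, Finset.mem_powersetCard_univ]
    constructor
    · rw [Finset.card_union_of_disjoint hdisj, hAcard, hBcard]; omega
    · have : (A ∪ B) ∩ T = A := by
        ext j
        simp only [Finset.mem_inter, Finset.mem_union]
        constructor
        · rintro ⟨hj1 | hj2, hjT⟩
          · exact hj1
          · exact absurd hjT (Finset.mem_compl.mp (hBT hj2))
        · intro hj; exact ⟨Or.inl hj, hAT hj⟩
      rw [this, hAcard]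
  · intro S hS
    simp only
    rw [Finset.union_comm, Finset.sdiff_union_inter]
  · rintro ⟨A, B⟩ hp
    obtain ⟨hA, hB⟩ := Finset.mem_product.mp hp
    obtain ⟨hAT, hAcard⟩ := Finset.mem_powersetCard.mp hA
    obtain ⟨hBT, hBcard⟩ := Finset.mem_powersetCard.mp hB
    have h1 : (A ∪ B) ∩ T = A := by
      ext j
      simp only [Finset.mem_inter, Finset.mem_union]
      constructor
      · rintro ⟨hj1 | hj2, hjT⟩
        · exact hj1
        · exact absurd hjT (Finset.mem_compl.mp (hBT hj2))
      · intro hj; exact ⟨Or.inl hj, hAT hj⟩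
    have h2 : (A ∪ B) \ T = B := by
      ext j
      simp only [Finset.mem_sdiff, Finset.mem_union]
      constructor
      · rintro ⟨hj1 | hj2, hjT⟩
        · exact absurd (hAT hj1) hjT
        · exact hj2
      · intro hj; exact ⟨Or.inr hj, Finset.mem_compl.mp (hBT hj)⟩
    simp [h1, h2]

end AuxCount

section AuxScalar

open Finset

lemma weight_sum_eq (n i k : ℕ) (t : Fin n → Bool)
    (ht : (Finset.univ.filter fun j => t j = true).card = k) (w : Bool → Bool → ℂ) :
    ∑ s ∈ Finset.univ.filter
        (fun s : Fin n → Bool => (Finset.univ.filter fun j => s j = true).card = i),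
      ∏ j, w (s j) (t j)
      = ∑ m ∈ Finset.Icc (i + k - n) (min i k),
          ((k.choose m * (n - k).choose (i - m) : ℕ) : ℂ) *
            (w true true ^ m * w true false ^ (i - m) * w false true ^ (k - m)
              * w false false ^ (n - k - (i - m))) := by
  set T : Finset (Fin n) := Finset.univ.filter fun j => t j = true with hTdef
  have hT : T.card = k := ht
  have htj : ∀ j, t j = decide (j ∈ T) := by intro j; simp [hTdef]
  rw [sum_boolfun_eq_sum_powersetCard n i (fun s => ∏ j, w (s j) (t j))]
  have hmaps : ∀ S ∈ Finset.powersetCard i (Finset.univ : Finset (Fin n)),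
      (S ∩ T).card ∈ Finset.Icc (i + k - n) (min i k) := by
    intro S hS
    have hSi : S.card = i := Finset.mem_powersetCard_univ.mp hS
    have h1 : (S ∩ T).card ≤ min i k := by
      refine le_min ?_ ?_
      · rw [← hSi]; exact Finset.card_le_card Finset.inter_subset_left
      · rw [← hT]; exact Finset.card_le_card Finset.inter_subset_right
    have h2 := Finset.card_union_add_card_inter S T
    have h3 : (S ∪ T).card ≤ n := le_trans (Finset.card_le_univ _) (by simp)
    exact Finset.mem_Icc.mpr ⟨by omega, h1⟩
  rw [← Finset.sum_fiberwise_of_maps_to hmaps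
    (fun S => ∏ j, w (decide (j ∈ S)) (t j))]
  refine Finset.sum_congr rfl fun m hm => ?_
  obtain ⟨hm1, hm2⟩ := Finset.mem_Icc.mp hm
  have hmi : m ≤ i := le_trans hm2 (min_le_left _ _)
  have hmk : m ≤ k := le_trans hm2 (min_le_right _ _)
  have hcongr : ∀ S ∈ (Finset.powersetCard i (Finset.univ : Finset (Fin n))).filter
      (fun S => (S ∩ T).card = m),
      ∏ j, w (decide (j ∈ S)) (t j)
        = w true true ^ m * w true false ^ (i - m) * w false true ^ (k - m)
          * w false false ^ (n - k - (i - m)) := by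
    intro S hS
    obtain ⟨hS1, hSm⟩ := Finset.mem_filter.mp hS
    have hSi : S.card = i := Finset.mem_powersetCard_univ.mp hS1
    simp only [htj]
    rw [prod_mem_pow]
    have c1 : (S \ T).card = i - m := by
      have := Finset.card_inter_add_card_sdiff S T; omega
    have c2 : (T \ S).card = k - m := by
      have := Finset.card_inter_add_card_sdiff T S
      rw [Finset.inter_comm] at this; omega
    have c3 : ((S ∪ T)ᶜ).card = n - k - (i - m) := by
      have h4 := Finset.card_union_add_card_inter S T
      have h5 : ((S ∪ T)ᶜ).card = n - (S ∪ T).card := by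
        rw [Finset.card_compl, Fintype.card_fin]
      have h6 : (S ∪ T).card ≤ n := le_trans (Finset.card_le_univ _) (by simp)
      omega
    rw [hSm, c1, c2, c3]
  rw [Finset.sum_congr rfl hcongr, Finset.sum_const, card_fiber n i k m T hT hmi]
  rw [nsmul_eq_mul]

lemma xcoef_eq (d n i k : ℕ) (hd : 0 < d) :
    ∑ m ∈ Finset.Icc (i + k - n) (min i k),
        ((k.choose m * (n - k).choose (i - m) : ℕ) : ℂ) *
          (wC d true true ^ m * wC d true false ^ (i - m) * wC d false true ^ (k - m)
            * wC d false false ^ (n - k - (i - m)))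
      = ((xcoef d n i k : ℝ) : ℂ) := by
  have hd0 : (d : ℂ) ≠ 0 := Nat.cast_ne_zero.mpr hd.ne'
  rw [xcoef]
  push_cast
  rw [Finset.mul_sum]
  refine Finset.sum_congr rfl fun m hm => ?_
  obtain ⟨hm1, hm2⟩ := Finset.mem_Icc.mp hm
  have hmi : m ≤ i := le_trans hm2 (min_le_left _ _)
  have hmk : m ≤ k := le_trans hm2 (min_le_right _ _)
  obtain ⟨e2, rfl⟩ : ∃ e2, k = m + e2 := ⟨k - m, by omega⟩
  obtain ⟨e3, rfl⟩ : ∃ e3, i = m + e3 := ⟨i - m, by omega⟩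
  obtain ⟨e4, rfl⟩ : ∃ e4, n = m + e2 + e3 + e4 := ⟨n - (m + e2 + e3), by omega⟩
  have r3 : m + e2 + e3 + e4 - (m + e2) = e3 + e4 := by omega
  have r1 : m + e3 - m = e3 := by omega
  have r2 : m + e2 - m = e2 := by omega
  have r4 : e3 + e4 - e3 = e4 := by omega
  have r5 : e3 + e4 + m - (m + e3) = e4 := by omega
  rw [r3, r1, r2, r4, r5]
  simp only [wC, alphaC, betaC, Bool.false_eq_true, eq_self_iff_true, if_true, if_false]
  have b1 : 1 - 1 / (d : ℂ) = ((d : ℂ) - 1) / d := by field_simp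
  have b2 : 1 + 1 / (d : ℂ) = ((d : ℂ) + 1) / d := by field_simp
  have b3 : -(1 / (d : ℂ)) = (-1) / d := by ring
  rw [b1, b2, b3, div_pow, div_pow, div_pow, div_pow, one_pow]
  field_simp
  ring

end AuxScalar

section AuxPfamAlg

open Finset

noncomputable def Qmat (d n : ℕ) (t : Fin n → Bool) :
    Matrix (Fin n → Fin d × Fin d) (Fin n → Fin d × Fin d) ℂ :=
  tpow n (fun j => if t j then Psym d else Pasym d)

lemma Pfam_eq_sum_Qmat (d n k : ℕ) :
    Pfam n k (Psym d) (Pasym d)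
      = ∑ t ∈ Finset.univ.filter
          (fun t : Fin n → Bool => (Finset.univ.filter fun j => t j = true).card = k),
          Qmat d n t := rfl

lemma Qmat_mul (d n : ℕ) (s t : Fin n → Bool) :
    Qmat d n s * Qmat d n t = if s = t then Qmat d n s else 0 := by
  have hmul : Qmat d n s * Qmat d n t
      = tpow n (fun j => (if s j then Psym d else Pasym d) * (if t j then Psym d else Pasym d)) :=
    tpow_mul n _ _
  rw [hmul]
  by_cases h : s = t
  · subst h
    rw [if_pos rfl]
    show _ = tpow n (fun j => if s j then Psym d else Pasym d)
    refine tpow_congr n fun j => ?_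
    show (if s j then Psym d else Pasym d) * (if s j then Psym d else Pasym d) = _
    cases hj : s j <;> simp [Psym_mul_Psym, Pasym_mul_Pasym]
  · rw [if_neg h]
    obtain ⟨j, hj⟩ : ∃ j, s j ≠ t j := by
      by_contra hc; push_neg at hc; exact h (funext hc)
    refine tpow_eq_zero n _ j ?_
    show (if s j then Psym d else Pasym d) * (if t j then Psym d else Pasym d) = 0
    cases hs : s j <;> cases ht : t j <;> rw [hs, ht] at hj <;>
      first
        | exact absurd rfl hj
        | simp [Psym_mul_Pasym, Pasym_mul_Psym]

lemma Pfam_mul (d n k l : ℕ) :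
    Pfam n k (Psym d) (Pasym d) * Pfam n l (Psym d) (Pasym d)
      = if k = l then Pfam n k (Psym d) (Pasym d) else 0 := by
  rw [Pfam_eq_sum_Qmat, Pfam_eq_sum_Qmat, Finset.sum_mul_sum]
  by_cases hkl : k = l
  · subst hkl
    rw [if_pos rfl]
    refine Finset.sum_congr rfl fun s hs => ?_
    rw [Finset.sum_congr rfl (fun t _ => Qmat_mul d n s t), Finset.sum_ite_eq, if_pos hs]
  · rw [if_neg hkl]
    refine Finset.sum_eq_zero fun s hs => Finset.sum_eq_zero fun t ht => ?_
    have hst : s ≠ t := by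
      rintro rfl
      rw [Finset.mem_filter] at hs ht
      exact hkl (hs.2.symm.trans ht.2)
    rw [Qmat_mul, if_neg hst]

lemma sum_Qmat (d n : ℕ) : ∑ t : Fin n → Bool, Qmat d n t = 1 := by
  have h2 := tpow_expand n (fun _ => (1 : ℂ)) (fun _ => (1 : ℂ)) (Psym d) (Pasym d)
  simp only [ite_self, one_smul, Finset.prod_const_one] at h2
  have h3 : (∑ t : Fin n → Bool, Qmat d n t)
      = tpow n (fun _ : Fin n => Psym d + Pasym d) := h2.symm
  rw [h3]
  have h4 : (fun _ : Fin n => Psym d + Pasym d)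
      = fun _ : Fin n => (1 : Matrix (Fin d × Fin d) (Fin d × Fin d) ℂ) := by
    funext j
    rw [Psym_add_Pasym]
  rw [h4, tpow_one]

lemma Pfam_sum_one (d n : ℕ) :
    ∑ k ∈ Finset.range (n + 1), Pfam n k (Psym d) (Pasym d) = 1 := by
  simp only [Pfam_eq_sum_Qmat]
  rw [← sum_boolfun_weight n (Qmat d n)]
  exact sum_Qmat d n

lemma sum_mulVec {γ : Type*} [Fintype γ] [DecidableEq γ] {κ : Type*} (s : Finset κ)
    (A : κ → Matrix γ γ ℂ) (v : γ → ℂ) :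
    (∑ k ∈ s, A k) *ᵥ v = ∑ k ∈ s, A k *ᵥ v := by
  funext x
  simp [Matrix.mulVec, dotProduct, Matrix.sum_apply, Finset.sum_mul]
  rw [Finset.sum_comm]

end AuxPfamAlg

section MainEq

open Finset

lemma main_ptBn_eq (d n : ℕ) (hd : 0 < d) (m : ℕ → ℝ) :
    ptBn n (∑ i ∈ Finset.range (n + 1), ((m i : ℝ) : ℂ) • Pfam n i (Phi d) (1 - Phi d))
      = ∑ k ∈ Finset.range (n + 1),
          ((∑ i ∈ Finset.range (n + 1), xcoef d n i k * m i : ℝ) : ℂ) •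
            Pfam n k (Psym d) (Pasym d) := by
  classical
  rw [ptBn_sum]
  have step1 : ∀ i, ptBn n (((m i : ℝ) : ℂ) • Pfam n i (Phi d) (1 - Phi d))
      = ((m i : ℝ) : ℂ) • ∑ s ∈ Finset.univ.filter
          (fun s : Fin n → Bool => (Finset.univ.filter fun j => s j = true).card = i),
          ∑ t : Fin n → Bool, (∏ j, wC d (s j) (t j)) • Qmat d n t := by
    intro i
    rw [ptBn_smul]
    congr 1
    rw [Pfam, ptBn_sum]
    refine Finset.sum_congr rfl fun s _ => ?_
    rw [ptBn_tpow]
    have hfn : (fun j => ptB (if s j then Phi d else 1 - Phi d))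
        = fun j => alphaC d (s j) • Psym d + betaC d (s j) • Pasym d := by
      funext j; exact ptB_pattern d (s j)
    rw [hfn]
    exact tpow_expand n (fun j => alphaC d (s j)) (fun j => betaC d (s j)) (Psym d) (Pasym d)
  simp only [step1]
  -- rearrange sums
  have step2 : ∑ i ∈ Finset.range (n + 1), ((m i : ℝ) : ℂ) •
        ∑ s ∈ Finset.univ.filter
          (fun s : Fin n → Bool => (Finset.univ.filter fun j => s j = true).card = i),
          ∑ t : Fin n → Bool, (∏ j, wC d (s j) (t j)) • Qmat d n t
      = ∑ t : Fin n → Bool, (∑ i ∈ Finset.range (n + 1), ((m i : ℝ) : ℂ) *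
          ∑ s ∈ Finset.univ.filter
            (fun s : Fin n → Bool => (Finset.univ.filter fun j => s j = true).card = i),
            ∏ j, wC d (s j) (t j)) • Qmat d n t := by
    have e1 : ∀ i, ((m i : ℝ) : ℂ) •
        (∑ s ∈ Finset.univ.filter
          (fun s : Fin n → Bool => (Finset.univ.filter fun j => s j = true).card = i),
          ∑ t : Fin n → Bool, (∏ j, wC d (s j) (t j)) • Qmat d n t)
        = ∑ t : Fin n → Bool, (((m i : ℝ) : ℂ) *
            ∑ s ∈ Finset.univ.filter
              (fun s : Fin n → Bool => (Finset.univ.filter fun j => s j = true).card = i),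
              ∏ j, wC d (s j) (t j)) • Qmat d n t := by
      intro i
      rw [Finset.sum_comm, Finset.smul_sum]
      refine Finset.sum_congr rfl fun t _ => ?_
      rw [← Finset.sum_smul, smul_smul]
    rw [Finset.sum_congr rfl fun i _ => e1 i, Finset.sum_comm]
    refine Finset.sum_congr rfl fun t _ => ?_
    rw [Finset.sum_smul]
  rw [step2, sum_boolfun_weight n]
  refine Finset.sum_congr rfl fun k hk => ?_
  have hscal : ∀ t ∈ Finset.univ.filter
      (fun t : Fin n → Bool => (Finset.univ.filter fun j => t j = true).card = k),
      (∑ i ∈ Finset.range (n + 1), ((m i : ℝ) : ℂ) *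
        ∑ s ∈ Finset.univ.filter
          (fun s : Fin n → Bool => (Finset.univ.filter fun j => s j = true).card = i),
          ∏ j, wC d (s j) (t j))
        = ((∑ i ∈ Finset.range (n + 1), xcoef d n i k * m i : ℝ) : ℂ) := by
    intro t ht
    rw [Finset.mem_filter] at ht
    push_cast
    refine Finset.sum_congr rfl fun i _ => ?_
    rw [weight_sum_eq n i k t ht.2 (wC d), xcoef_eq d n i k hd]
    push_cast
    ring
  rw [Finset.sum_congr rfl fun t ht => congrArg (· • Qmat d n t) (hscal t ht)]
  rw [← Finset.smul_sum, Pfam_eq_sum_Qmat]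

end MainEq

/-- For `M = ∑ᵢ mᵢ P_i^n(Φ, Φ^⊥)`, the factorwise partial transpose is
`M^{T_B} = ∑ₖ tₖ P_k^n(P₊, P₋)` with `tₖ = ∑ᵢ x_{i,k} mᵢ`; in particular every
eigenvalue of `M^{T_B}` is among the `tₖ`. -/
theorem ptBn_Pfam_decomposition (d n : ℕ) (hd : 0 < d) (m : ℕ → ℝ) :
    ptBn n (∑ i ∈ Finset.range (n + 1), ((m i : ℝ) : ℂ) • Pfam n i (Phi d) (1 - Phi d))
      = ∑ k ∈ Finset.range (n + 1),
          ((∑ i ∈ Finset.range (n + 1), xcoef d n i k * m i : ℝ) : ℂ) •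
            Pfam n k (Psym d) (Pasym d) ∧
    ∀ (c : ℂ) (v : (Fin n → Fin d × Fin d) → ℂ), v ≠ 0 →
      (ptBn n (∑ i ∈ Finset.range (n + 1),
          ((m i : ℝ) : ℂ) • Pfam n i (Phi d) (1 - Phi d))) *ᵥ v = c • v →
      ∃ k ≤ n, c = ((∑ i ∈ Finset.range (n + 1), xcoef d n i k * m i : ℝ) : ℂ) := by
  classical
  refine ⟨main_ptBn_eq d n hd m, ?_⟩
  intro c v hv hev
  rw [main_ptBn_eq d n hd m] at hev
  obtain ⟨k, hk, hne⟩ : ∃ k ∈ Finset.range (n + 1),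
      Pfam n k (Psym d) (Pasym d) *ᵥ v ≠ 0 := by
    by_contra hc
    push_neg at hc
    apply hv
    have h1 : v = (∑ k ∈ Finset.range (n + 1), Pfam n k (Psym d) (Pasym d)) *ᵥ v := by
      rw [Pfam_sum_one, Matrix.one_mulVec]
    rw [h1, _root_.sum_mulVec, Finset.sum_eq_zero hc]
  refine ⟨k, Finset.mem_range_succ_iff.mp hk, ?_⟩
  have hQM : Pfam n k (Psym d) (Pasym d) *
      (∑ l ∈ Finset.range (n + 1),
        ((∑ i ∈ Finset.range (n + 1), xcoef d n i l * m i : ℝ) : ℂ) •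
          Pfam n l (Psym d) (Pasym d))
      = ((∑ i ∈ Finset.range (n + 1), xcoef d n i k * m i : ℝ) : ℂ) •
          Pfam n k (Psym d) (Pasym d) := by
    rw [Finset.mul_sum]
    have hterm : ∀ l ∈ Finset.range (n + 1),
        Pfam n k (Psym d) (Pasym d) *
          (((∑ i ∈ Finset.range (n + 1), xcoef d n i l * m i : ℝ) : ℂ) •
            Pfam n l (Psym d) (Pasym d))
        = if k = l then ((∑ i ∈ Finset.range (n + 1), xcoef d n i l * m i : ℝ) : ℂ) •
            Pfam n k (Psym d) (Pasym d) else 0 := by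
      intro l _
      rw [Matrix.mul_smul, Pfam_mul]
      split_ifs <;> simp
    rw [Finset.sum_congr rfl hterm, Finset.sum_ite_eq, if_pos hk]
  have h2 := congrArg (fun w => Pfam n k (Psym d) (Pasym d) *ᵥ w) hev
  simp only [Matrix.mulVec_mulVec] at h2
  rw [hQM, Matrix.smul_mulVec, Matrix.mulVec_smul] at h2
  have h3 : ((((∑ i ∈ Finset.range (n + 1), xcoef d n i k * m i : ℝ) : ℂ)) - c) •
      (Pfam n k (Psym d) (Pasym d) *ᵥ v) = 0 := by
    rw [sub_smul, h2, sub_self]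
  rcases smul_eq_zero.mp h3 with h | h
  · exact (sub_eq_zero.mp h).symm
  · exact absurd h hne
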